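/- Let g ≥ 1, q a positive real (or natural) number, and α_1, …, α_{2g} ∈ ℂ. Suppose the polynomial P(T) = Π_{i=1}^{2g} (1 − α_i T) has the functional-equation property P(T) = q^g · T^{2g} · P(1/(qT)) for all T ≠ 0, and that the power sums α_1^k + ⋯ + α_{2g}^k vanish for k = 1, …, g. Then P(1) = 1 + q^g. -/

import Mathlib

open Polynomial Finset


lemma esymm_map_mul_aux (c : ℂ) (s : Multiset ℂ) (k : ℕ) :
    (s.map (fun x => c * x)).esymm k = c ^ k * s.esymm k := by
  rw [Multiset.esymm, Multiset.esymm, Multiset.powersetCard_map, Multiset.map_map,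
    ← Multiset.sum_map_mul_left]
  congr 1
  refine Multiset.map_congr rfl ?_
  intro t ht
  have hc : Multiset.card t = k := (Multiset.mem_powersetCard.mp ht).2
  simp only [Function.comp_apply]
  calc (Multiset.map (fun x => c * x) t).prod
      = (Multiset.map (fun _ => c) t).prod * (Multiset.map (fun x => x) t).prod := by
        rw [← Multiset.prod_map_mul]
    _ = c ^ k * t.prod := by
        rw [Multiset.map_const', Multiset.prod_replicate, hc, Multiset.map_id']

lemma reflect_prod_aux {ι : Type*} [DecidableEq ι] (s : Finset ι) (p : ι → ℂ[X])
    (h : ∀ i ∈ s, (p i).natDegree ≤ 1) :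
    reflect s.card (∏ i ∈ s, p i) = ∏ i ∈ s, reflect 1 (p i) := by
  induction s using Finset.induction with
  | empty => simp
  | @insert a s ha ih =>
    rw [Finset.card_insert_of_notMem ha, Finset.prod_insert ha, Finset.prod_insert ha, add_comm,
      reflect_mul _ _ (h a (Finset.mem_insert_self a s))
        (le_trans (Polynomial.natDegree_prod_le s p) ?_),
      ih (fun i hi => h i (Finset.mem_insert_of_mem hi))]
    calc ∑ i ∈ s, (p i).natDegree ≤ ∑ _i ∈ s, 1 :=
          Finset.sum_le_sum (fun i hi => h i (Finset.mem_insert_of_mem hi))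
      _ = s.card := by simp

lemma reflect_one_X_sub_C (a : ℂ) : reflect 1 (X - C a) = 1 - C a * X := by
  have h1 : reflect 1 (X : ℂ[X]) = 1 := by
    rw [← pow_one (X : ℂ[X]), reflect_monomial]
    simp
  rw [reflect_sub, h1, reflect_C]
  ring


lemma newton_aux (g : ℕ) (α : Fin (2*g) → ℂ)
    (ht : ∀ k, 1 ≤ k → k ≤ g → ∑ i, α i ^ k = 0) :
    ∀ k, 1 ≤ k → k ≤ g → (Finset.univ.val.map α).esymm k = 0 := by
  intro k hk1 hkg
  have h := congrArg (MvPolynomial.aeval α) (MvPolynomial.mul_esymm_eq_sum (Fin (2*g)) ℂ k)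
  simp only [map_mul, map_natCast, map_sum, map_pow, map_neg, map_one,
    MvPolynomial.aeval_esymm_eq_multiset_esymm] at h
  have hsum : ∑ a ∈ (Finset.HasAntidiagonal.antidiagonal k).filter (fun a => a.1 < k),
      (-1:ℂ)^a.1 * (Finset.univ.val.map α).esymm a.1 *
        (MvPolynomial.aeval α) (MvPolynomial.psum (Fin (2*g)) ℂ a.2) = 0 := by
    refine Finset.sum_eq_zero fun a ha => ?_
    rw [Finset.mem_filter, Finset.HasAntidiagonal.mem_antidiagonal] at ha
    have h2 : 1 ≤ a.2 := by omega
    have h3 : a.2 ≤ g := by omega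
    have : (MvPolynomial.aeval α) (MvPolynomial.psum (Fin (2*g)) ℂ a.2) = 0 := by
      simpa [MvPolynomial.psum] using ht a.2 h2 h3
    rw [this, mul_zero]
  rw [hsum, mul_zero] at h
  have hk0 : (k:ℂ) ≠ 0 := Nat.cast_ne_zero.mpr (by omega)
  exact (mul_eq_zero.mp h).resolve_left hk0

theorem stmt10 (g : ℕ) (hg : 1 ≤ g) (q : ℕ) (hq : 0 < q) (α : Fin (2 * g) → ℂ)
    (hfe : ∀ T : ℂ, T ≠ 0 →
      ∏ i, (1 - α i * T) = (q : ℂ) ^ g * T ^ (2 * g) * ∏ i, (1 - α i * (1 / ((q : ℂ) * T))))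
    (ht : ∀ k, 1 ≤ k → k ≤ g → ∑ i, α i ^ k = 0) :
    ∏ i, (1 - α i * 1) = 1 + (q : ℂ) ^ g := by
  have hq0 : (q:ℂ) ≠ 0 := Nat.cast_ne_zero.mpr hq.ne'
  set ms : Multiset ℂ := Finset.univ.val.map α with hms
  have hcard : Multiset.card ms = 2 * g := by simp [hms]
  have hE : ∀ k, 1 ≤ k → k ≤ g → ms.esymm k = 0 := by rw [hms]; exact newton_aux g α ht
  -- the polynomial A = ∏ (1 - α_i X)
  set A : ℂ[X] := ∏ i, (1 - C (α i) * X) with hA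
  set Rm : ℂ[X] := (ms.map fun t => X - C t).prod with hRm
  have hRmprod : Rm = ∏ i, (X - C (α i)) := by
    rw [hRm, hms, Multiset.map_map]; rfl
  have hArefl : A = reflect (2*g) Rm := by
    have h := reflect_prod_aux (Finset.univ : Finset (Fin (2*g))) (fun i => X - C (α i))
      (fun i _ => natDegree_X_sub_C_le (α i))
    simp only [Finset.card_univ, Fintype.card_fin] at h
    rw [hRmprod, hA, h]
    exact (Finset.prod_congr rfl fun i _ => (reflect_one_X_sub_C (α i)).symm)
  have hAcoeff : ∀ k, k ≤ 2*g → A.coeff k = (-1)^k * ms.esymm k := by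
    intro k hk
    rw [hArefl, coeff_reflect, revAt_le hk,
      Multiset.prod_X_sub_C_coeff ms (by rw [hcard]; omega : 2*g - k ≤ Multiset.card ms),
      hcard, Nat.sub_sub_self hk]
  -- the B side
  set ms' : Multiset ℂ := ms.map (fun x => ((q:ℂ))⁻¹ * x) with hms'
  have hcard' : Multiset.card ms' = 2*g := by rw [hms', Multiset.card_map, hcard]
  set Rq : ℂ[X] := (ms'.map fun t => X - C t).prod with hRq
  set B : ℂ[X] := C ((q:ℂ)^g) * Rq with hB
  have hBcoeff : ∀ k, k ≤ 2*g → B.coeff k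
      = (q:ℂ)^g * ((-1)^(2*g-k) * (((q:ℂ)⁻¹)^(2*g-k) * ms.esymm (2*g-k))) := by
    intro k hk
    rw [hB, coeff_C_mul, Multiset.prod_X_sub_C_coeff ms' (by rw [hcard']; omega), hcard', hms',
      esymm_map_mul_aux]
  have hAB : A = B := by
    apply Polynomial.eq_of_infinite_eval_eq
    refine Set.Infinite.mono ?_ ((Set.finite_singleton (0:ℂ)).infinite_compl)
    intro T hT
    have hT0 : T ≠ 0 := hT
    have hAeval : A.eval T = ∏ i, (1 - α i * T) := by
      simp [hA, eval_prod]
    have hBeval : B.eval T = (q:ℂ)^g * ∏ i, (T - (q:ℂ)⁻¹ * α i) := by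
      rw [hB, eval_mul, eval_C, hRq, eval_multiset_prod, Multiset.map_map, hms', hms,
        Multiset.map_map, Multiset.map_map]
      rw [show ∏ i, (T - (q:ℂ)⁻¹ * α i)
        = (Finset.univ.val.map fun i => (T - (q:ℂ)⁻¹ * α i)).prod from rfl]
      congr 1
      exact congrArg Multiset.prod (Multiset.map_congr rfl fun i _ => by simp)
    have key : (q:ℂ)^g * T^(2*g) * ∏ i, (1 - α i * (1/((q:ℂ)*T)))
        = (q:ℂ)^g * ∏ i, (T - (q:ℂ)⁻¹ * α i) := by
      have hT2 : T^(2*g) = ∏ _i : Fin (2*g), T := by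
        rw [Finset.prod_const]; simp
      rw [mul_assoc, hT2, ← Finset.prod_mul_distrib]
      refine congrArg _ (Finset.prod_congr rfl fun i _ => ?_)
      field_simp
    show A.eval T = B.eval T
    rw [hAeval, hBeval, hfe T hT0, key]
  -- degree bound
  have hAdeg : A.natDegree ≤ 2*g := by
    have h2 : A.natDegree ≤ ∑ _i : Fin (2*g), 1 := by
      rw [hA]
      refine le_trans (natDegree_prod_le _ _) (Finset.sum_le_sum ?_)
      intro i _
      compute_degree
    simpa using h2
  -- assemble
  have h1 : ∏ i, (1 - α i * 1) = A.eval 1 := by simp [hA, eval_prod]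
  rw [h1, eval_eq_sum_range' (Nat.lt_succ_of_le hAdeg) 1]
  simp only [one_pow, mul_one]
  rw [Finset.sum_range_succ]
  have hmid : ∑ k ∈ Finset.range (2*g), A.coeff k = 1 := by
    rw [Finset.sum_eq_single 0]
    · rw [hAcoeff 0 (by omega)]
      simp [Multiset.esymm]
    · intro k hk hk0
      rw [Finset.mem_range] at hk
      rcases le_or_gt k g with h|h
      · rw [hAcoeff k (by omega), hE k (by omega) h, mul_zero]
      · have hc := congrArg (fun p => Polynomial.coeff p k) hAB
        rw [hc, hBcoeff k (by omega), hE (2*g-k) (by omega) (by omega), mul_zero, mul_zero,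
          mul_zero]
    · intro h
      exfalso
      exact h (Finset.mem_range.mpr (by omega))
  rw [hmid]
  have hc := congrArg (fun p => Polynomial.coeff p (2*g)) hAB
  rw [hc, hBcoeff (2*g) le_rfl]
  simp [Multiset.esymm]
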